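/- Let C be a small category, let κ be an infinite regular cardinal, and let D be a filtered category having fewer than κ morphisms. Let X : D ⥤ C be a diagram and let X̄ denote the colimit in Ind C of the composite D ⥤ C ⥤ Ind C (the ind-object represented by the diagram X). Then for every regular cardinal λ ≥ κ and every functor Y from the linearly ordered category of ordinals strictly less than λ to Ind C, the canonical map colim_{β<λ} Hom_{Ind C}(X̄, Y_β) → Hom_{Ind C}(X̄, colim_{β<λ} Y_β) is a bijection. -/

import Mathlib

open CategoryTheory CategoryTheory.Limits Opposite

universe u

section
variable {C : Type u} [SmallCategory C]

noncomputable def indCoyonedaIso (c : C) :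
    Ind.inclusion C ⋙ coyoneda.obj (op (yoneda.obj c)) ≅
      coyoneda.obj (op (Ind.yoneda.obj c)) :=
  NatIso.ofComponents
    (fun Z => Equiv.toIso
      { toFun := fun u => Ind.inclusion.fullyFaithful.preimage
          ((Ind.yonedaCompInclusion (C := C)).hom.app c ≫ u)
        invFun := fun v => (Ind.yonedaCompInclusion (C := C)).inv.app c ≫ (Ind.inclusion C).map v
        left_inv := fun u => by simp
        right_inv := fun v => by
          apply Ind.inclusion.fullyFaithful.map_injective
          simp })
    (fun {Z Z'} f => by
      ext u
      apply Ind.inclusion.fullyFaithful.map_injective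
      simp)

noncomputable instance indYonedaPreserves (c : C) {O : Type u} [SmallCategory O] [IsFiltered O]
    (Y : O ⥤ Ind C) : PreservesColimit Y (coyoneda.obj (op (Ind.yoneda.obj c))) :=
  preservesColimit_of_natIso Y (indCoyonedaIso c)

end

theorem exists_upper_bound {l : Cardinal.{u}} (hl : l.IsRegular) {ι : Type u}
    (hι : Cardinal.mk ι < l) (f : ι → l.ord.ToType) : ∃ m, ∀ i, f i ≤ m := by
  let e := Ordinal.ToType.mk (o := l.ord)
  have h : (⨆ i, ((e.symm (f i)) : Ordinal)) < l.ord :=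
    Ordinal.iSup_lt_ord (by rw [hl.cof_eq]; exact hι) (fun i => (e.symm (f i)).2)
  refine ⟨e ⟨_, h⟩, fun i => ?_⟩
  rw [← e.apply_symm_apply (f i)]
  exact e.le_iff_le.mpr (Ordinal.le_iSup (fun i => ((e.symm (f i)) : Ordinal)) i)


/-- An ind-object representable by a filtered diagram with fewer than `κ` morphisms is
`κ`-small relative to all ind-maps: for every regular cardinal `λ ≥ κ` and every functor `Y`
from the linearly ordered category of ordinals strictly less than `λ` to `Ind C`, the
canonical map `colim_{β<λ} Hom(X̄, Y β) → Hom(X̄, colim_{β<λ} Y β)` is a bijection, where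
`X̄` is the colimit in `Ind C` of the composite `D ⥤ C ⥤ Ind C`. -/
theorem indObject_small_of_small_diagram
    {C : Type u} [SmallCategory C]
    (κ : Cardinal.{u}) (hκ : κ.IsRegular)
    {D : Type u} [SmallCategory D] [IsFiltered D]
    (hD : Cardinal.mk (Σ (d d' : D), d ⟶ d') < κ)
    (X : D ⥤ C)
    (l : Cardinal.{u}) (hl : l.IsRegular) (hκl : κ ≤ l)
    (Y : l.ord.ToType ⥤ Ind C) :
    haveI : Nonempty l.ord.ToType :=
      Ordinal.nonempty_toType_iff.mpr (by
        simpa [Cardinal.ord_eq_zero] using hl.pos.ne')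
    Function.Bijective
      (colimit.post Y (coyoneda.obj (op (colimit (X ⋙ Ind.yoneda))))) := by
  haveI hO : Nonempty l.ord.ToType :=
    Ordinal.nonempty_toType_iff.mpr (by
      simpa [Cardinal.ord_eq_zero] using hl.pos.ne')
  show Function.Bijective (colimit.post Y (coyoneda.obj (op (colimit (X ⋙ Ind.yoneda)))))
  -- cardinality facts
  have hDκ : Cardinal.mk D < κ :=
    lt_of_le_of_lt (Cardinal.mk_le_of_injective
      (f := fun d => (⟨d, d, 𝟙 d⟩ : Σ (d d' : D), d ⟶ d'))
      (fun a b h => congrArg (fun x => x.1) h)) hD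
  have hDl : Cardinal.mk D < l := hDκ.trans_le hκl
  have hMl : Cardinal.mk (Σ (d d' : D), d ⟶ d') < l := hD.trans_le hκl
  set F : D ⥤ Ind C := X ⋙ Ind.yoneda with hF
  set Xb : Ind C := colimit F with hXb
  -- compactness of the objects of the diagram
  have bij : ∀ d : D, Function.Bijective (colimit.post Y (coyoneda.obj (op (F.obj d)))) := by
    intro d
    rw [← isIso_iff_bijective]
    have : IsIso (colimit.post Y (coyoneda.obj (op (Ind.yoneda.obj (X.obj d))))) := inferInstance
    exact this
  have postApp : ∀ (Z : Ind C) (β : l.ord.ToType) (u : Z ⟶ Y.obj β),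
      colimit.post Y (coyoneda.obj (op Z)) (colimit.ι (Y ⋙ coyoneda.obj (op Z)) β u)
        = u ≫ colimit.ι Y β := fun Z β u => by
    have := ConcreteCategory.congr_hom (colimit.ι_post Y (coyoneda.obj (op Z)) β) u
    exact this
  constructor
  · -- injectivity
    intro x y hxy
    obtain ⟨β, f, rfl⟩ := Types.jointly_surjective' x
    obtain ⟨γ, g, rfl⟩ := Types.jointly_surjective' y
    rw [postApp, postApp] at hxy
    set δ : l.ord.ToType := max β γ with hδ
    let hβδ : β ⟶ δ := homOfLE (le_max_left _ _)
    let hγδ : γ ⟶ δ := homOfLE (le_max_right _ _)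
    rw [← Types.Colimit.w_apply (F := Y ⋙ coyoneda.obj (op Xb)) hβδ,
        ← Types.Colimit.w_apply (F := Y ⋙ coyoneda.obj (op Xb)) hγδ]
    set f' : Xb ⟶ Y.obj δ := (Y ⋙ coyoneda.obj (op Xb)).map hβδ f with hf'def
    set g' : Xb ⟶ Y.obj δ := (Y ⋙ coyoneda.obj (op Xb)).map hγδ g with hg'def
    have hf' : f' ≫ colimit.ι Y δ = g' ≫ colimit.ι Y δ := by
      have e1 : f' = f ≫ Y.map hβδ := rfl
      have e2 : g' = g ≫ Y.map hγδ := rfl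
      rw [e1, e2, Category.assoc, Category.assoc, colimit.w, colimit.w, hxy]
    have key : ∀ d : D, ∃ (ε : l.ord.ToType) (h : δ ⟶ ε),
        (colimit.ι F d ≫ f') ≫ Y.map h = (colimit.ι F d ≫ g') ≫ Y.map h := by
      intro d
      have h1 : colimit.ι (Y ⋙ coyoneda.obj (op (F.obj d))) δ (colimit.ι F d ≫ f')
          = colimit.ι (Y ⋙ coyoneda.obj (op (F.obj d))) δ (colimit.ι F d ≫ g') := by
        apply (bij d).injective
        rw [postApp, postApp, Category.assoc, Category.assoc, hf']
      rw [Types.FilteredColimit.colimit_eq_iff] at h1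
      obtain ⟨k, p, q, hpq⟩ := h1
      rw [Subsingleton.elim q p] at hpq
      exact ⟨k, p, hpq⟩
    choose ε hε hfg using key
    obtain ⟨m, hm⟩ := exists_upper_bound hl hDl ε
    obtain ⟨d0⟩ := IsFiltered.nonempty (C := D)
    have hδm : δ ≤ m := (leOfHom (hε d0)).trans (hm d0)
    have hfinal : f' ≫ Y.map (homOfLE hδm) = g' ≫ Y.map (homOfLE hδm) := by
      apply colimit.hom_ext
      intro d
      have h2 : (homOfLE hδm : δ ⟶ m) = hε d ≫ homOfLE (hm d) := Subsingleton.elim _ _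
      have h3 := congrArg (fun t => t ≫ Y.map (homOfLE (hm d))) (hfg d)
      simp only [Category.assoc] at h3 ⊢
      rw [h2, Y.map_comp]
      simp only [← Category.assoc] at h3 ⊢
      exact h3
    rw [← Types.Colimit.w_apply (F := Y ⋙ coyoneda.obj (op Xb)) (homOfLE hδm),
        ← Types.Colimit.w_apply (F := Y ⋙ coyoneda.obj (op Xb)) (homOfLE hδm) (x := g')]
    exact congrArg (colimit.ι (Y ⋙ coyoneda.obj (op Xb)) m) hfinal
  · -- surjectivity
    intro f
    have key : ∀ d : D, ∃ (β : l.ord.ToType) (u : F.obj d ⟶ Y.obj β),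
        u ≫ colimit.ι Y β = colimit.ι F d ≫ f := by
      intro d
      obtain ⟨p, hp⟩ := (bij d).surjective (colimit.ι F d ≫ f)
      obtain ⟨β, u, rfl⟩ := Types.jointly_surjective' p
      rw [postApp] at hp
      exact ⟨β, u, hp⟩
    choose β u hu using key
    obtain ⟨b, hb⟩ := exists_upper_bound hl hDl β
    set v : ∀ d, F.obj d ⟶ Y.obj b := fun d => u d ≫ Y.map (homOfLE (hb d)) with hv_def
    have hv : ∀ d, v d ≫ colimit.ι Y b = colimit.ι F d ≫ f := by
      intro d
      rw [hv_def]
      rw [Category.assoc, colimit.w]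
      exact hu d
    have key2 : ∀ m : (Σ (d d' : D), d ⟶ d'), ∃ (γ : l.ord.ToType) (h : b ⟶ γ),
        (F.map m.2.2 ≫ v m.2.1) ≫ Y.map h = v m.1 ≫ Y.map h := by
      rintro ⟨d, d', g⟩
      have h1 : colimit.ι (Y ⋙ coyoneda.obj (op (F.obj d))) b (F.map g ≫ v d')
          = colimit.ι (Y ⋙ coyoneda.obj (op (F.obj d))) b (v d) := by
        apply (bij d).injective
        rw [postApp, postApp, Category.assoc, hv d']
        rw [← Category.assoc, colimit.w, hv d]
      rw [Types.FilteredColimit.colimit_eq_iff] at h1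
      obtain ⟨k, p, q, hpq⟩ := h1
      rw [Subsingleton.elim q p] at hpq
      exact ⟨k, p, hpq⟩
    choose γ hγ hw using key2
    obtain ⟨c, hc⟩ := exists_upper_bound hl hMl γ
    obtain ⟨d0⟩ := IsFiltered.nonempty (C := D)
    have hbc : b ≤ c := (leOfHom (hγ ⟨d0, d0, 𝟙 d0⟩)).trans (hc _)
    set w : ∀ d, F.obj d ⟶ Y.obj c := fun d => v d ≫ Y.map (homOfLE hbc) with hw_def
    have hnat : ∀ {d d' : D} (g : d ⟶ d'), F.map g ≫ w d' = w d := by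
      intro d d' g
      have h2 : (homOfLE hbc : b ⟶ c) = hγ ⟨d, d', g⟩ ≫ homOfLE (hc ⟨d, d', g⟩) :=
        Subsingleton.elim _ _
      have h3 := congrArg (fun t => t ≫ Y.map (homOfLE (hc ⟨d, d', g⟩))) (hw ⟨d, d', g⟩)
      rw [hw_def]
      simp only [h2, Y.map_comp]
      simp only [Category.assoc] at h3 ⊢
      simp only [← Category.assoc] at h3 ⊢
      exact h3
    let cone : Cocone F :=
      { pt := Y.obj c
        ι := { app := w, naturality := fun d d' g => by simp [hnat g] } }
    refine ⟨colimit.ι (Y ⋙ coyoneda.obj (op Xb)) c (colimit.desc F cone), ?_⟩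
    rw [postApp]
    apply colimit.hom_ext
    intro d
    rw [← Category.assoc, colimit.ι_desc]
    show w d ≫ colimit.ι Y c = colimit.ι F d ≫ f
    rw [hw_def, Category.assoc, colimit.w]
    exact hv d
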